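/- For a sequence of i.i.d. uniform draws from {1,…,n}, the probability that each of the first h−1 draws after an initial set of k distinct marked elements hits a previously unmarked element (each drawn element becoming marked) and the h-th relevant event is hitting a marked element, i.e., the probability that a geometrically growing marked set of initial size k grows by exactly h before a repeat, is (k+h)(n−k−1)!/(n^h (n−k−h)!), and these probabilities sum to 1 over h = 1,…,n−k. -/

import Mathlib

open Finset

/-- Normalization of the branch-size distribution: for `1 ≤ k ≤ n−1`, the probabilities
`p(h) = (k+h)(n−k−1)!/(n^h (n−k−h)!)` of a marked set of initial size `k` growing by
exactly `h` before the first repeated draw sum to `1` over `h = 1,…,n−k`. -/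
theorem stmt1 (n k : ℕ) (hk1 : 1 ≤ k) (hk2 : k ≤ n - 1) :
    ∑ h ∈ Finset.Icc 1 (n - k),
        ((k : ℝ) + h) * (n - k - 1).factorial / ((n : ℝ) ^ h * (n - k - h).factorial)
      = 1 := by
  have hn : 2 ≤ n := by omega
  set M := n - k with hM
  have hM1 : 1 ≤ M := by omega
  set F : ℕ → ℝ := fun h =>
    ((M - 1).factorial : ℝ) * ((M - h : ℕ) : ℝ) / ((n : ℝ) ^ h * ((M - h).factorial : ℝ))
    with hF
  have key : ∀ i ∈ Finset.range M,
      ((k : ℝ) + ((1 + i : ℕ) : ℝ)) * (M - 1).factorial /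
        ((n : ℝ) ^ (1 + i) * ((M - (1 + i)).factorial : ℝ)) = F i - F (i + 1) := by
    intro i hi
    simp only [Finset.mem_range] at hi
    obtain ⟨j, hj⟩ : ∃ j, M = i + 1 + j := ⟨M - i - 1, by omega⟩
    have h1 : M - i = j + 1 := by omega
    have h2 : M - (1 + i) = j := by omega
    have h3 : M - (i + 1) = j := by omega
    simp only [hF, h1, h2, h3, Nat.factorial_succ]
    have hn0 : (n : ℝ) ≠ 0 := by positivity
    have hj0 : ((j.factorial : ℝ)) ≠ 0 := Nat.cast_ne_zero.2 j.factorial_ne_zero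
    have hnk' : (n : ℝ) = (k : ℝ) + i + 1 + j := by
      have : n = k + i + 1 + j := by omega
      rw [this]; push_cast; ring
    field_simp
    rw [hnk']
    push_cast
    ring
  rw [show Finset.Icc 1 M = Finset.Ico 1 (M + 1) from (Finset.Ico_add_one_right_eq_Icc 1 M).symm,
    Finset.sum_Ico_eq_sum_range]
  simp only [Nat.add_sub_cancel]
  rw [Finset.sum_congr rfl key, Finset.sum_range_sub']
  have hFM : F M = 0 := by simp [hF]
  have hF0 : F 0 = 1 := by
    simp only [hF, pow_zero, Nat.sub_zero, one_mul]
    obtain ⟨M', hM'⟩ : ∃ M', M = M' + 1 := ⟨M - 1, by omega⟩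
    rw [hM']
    simp [Nat.factorial_succ]
    field_simp
  rw [hFM, hF0, sub_zero]
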